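/- Four-tangent I-patch tangency: Let L₁, L₂, L₃, L₄, C₁, C₂ : ℝ² → ℝ be affine functions, w₀, w₁, w₂ ∈ ℝ, and define I(x,y) = w₁·L₁(x,y)·L₂(x,y)·C₂(x,y)² + w₂·L₃(x,y)·L₄(x,y)·C₁(x,y)² + w₀·C₁(x,y)²·C₂(x,y)². If p ∈ ℝ² satisfies L₁(p) = 0 and C₁(p) = 0, then I(p) = 0 and ∇I(p) = w₁·L₂(p)·C₂(p)²·∇L₁(p). In particular, if w₁ ≠ 0, L₂(p) ≠ 0, C₂(p) ≠ 0, and ∇L₁(p) ≠ 0, then the line L₁ = 0 is tangent to the curve I = 0 at p. -/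

import Mathlib

/-- Four-tangent I-patch tangency: with affine `L₁,…,L₄, C₁, C₂` and
`I = w₁·L₁·L₂·C₂² + w₂·L₃·L₄·C₁² + w₀·C₁²·C₂²`, if `L₁(p) = 0` and `C₁(p) = 0`
then `I(p) = 0` and `∇I(p) = w₁·L₂(p)·C₂(p)²·∇L₁(p)`; hence if `w₁ ≠ 0`,
`L₂(p) ≠ 0`, `C₂(p) ≠ 0` and `∇L₁(p) ≠ 0`, the line `L₁ = 0` is tangent to
the curve `I = 0` at `p`. -/
theorem stmt_5
    (a₁ b₁ c₁ a₂ b₂ c₂ a₃ b₃ c₃ a₄ b₄ c₄ aC₁ bC₁ cC₁ aC₂ bC₂ cC₂ : ℝ)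
    (L₁ L₂ L₃ L₄ C₁ C₂ : ℝ × ℝ → ℝ)
    (hL₁ : ∀ q, L₁ q = a₁ * q.1 + b₁ * q.2 + c₁)
    (hL₂ : ∀ q, L₂ q = a₂ * q.1 + b₂ * q.2 + c₂)
    (hL₃ : ∀ q, L₃ q = a₃ * q.1 + b₃ * q.2 + c₃)
    (hL₄ : ∀ q, L₄ q = a₄ * q.1 + b₄ * q.2 + c₄)
    (hC₁ : ∀ q, C₁ q = aC₁ * q.1 + bC₁ * q.2 + cC₁)
    (hC₂ : ∀ q, C₂ q = aC₂ * q.1 + bC₂ * q.2 + cC₂)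
    (w₀ w₁ w₂ : ℝ)
    (I : ℝ × ℝ → ℝ)
    (hI : ∀ q, I q = w₁ * (L₁ q * L₂ q * (C₂ q) ^ 2)
      + w₂ * (L₃ q * L₄ q * (C₁ q) ^ 2) + w₀ * ((C₁ q) ^ 2 * (C₂ q) ^ 2))
    (p : ℝ × ℝ) (hp₁ : L₁ p = 0) (hpC : C₁ p = 0) :
    I p = 0 ∧
    fderiv ℝ I p = (w₁ * L₂ p * (C₂ p) ^ 2) • fderiv ℝ L₁ p ∧
    (w₁ ≠ 0 → L₂ p ≠ 0 → C₂ p ≠ 0 → fderiv ℝ L₁ p ≠ 0 →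
      ∃ c : ℝ, c ≠ 0 ∧ fderiv ℝ I p = c • fderiv ℝ L₁ p) := by
  have hL₁' := funext hL₁; subst hL₁'
  have hL₂' := funext hL₂; subst hL₂'
  have hL₃' := funext hL₃; subst hL₃'
  have hL₄' := funext hL₄; subst hL₄'
  have hC₁' := funext hC₁; subst hC₁'
  have hC₂' := funext hC₂; subst hC₂'
  have hI' := funext hI; subst hI'
  have key : ∀ a b c : ℝ, HasFDerivAt (fun q : ℝ × ℝ => a * q.1 + b * q.2 + c)
      (a • ContinuousLinearMap.fst ℝ ℝ ℝ + b • ContinuousLinearMap.snd ℝ ℝ ℝ) p := by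
    intro a b c
    exact ((hasFDerivAt_fst.const_mul a).add (hasFDerivAt_snd.const_mul b)).add_const c
  beta_reduce at hp₁ hpC ⊢
  have sq : ∀ (a b c : ℝ) (D : ℝ × ℝ →L[ℝ] ℝ), HasFDerivAt (fun q : ℝ × ℝ => a * q.1 + b * q.2 + c) D p →
      HasFDerivAt (fun q : ℝ × ℝ => (a * q.1 + b * q.2 + c) ^ 2)
        ((2 * (a * p.1 + b * p.2 + c)) • D) p := by
    intro a b c D hD
    have := hD.mul hD
    simpa [pow_two, two_mul, add_smul, Pi.mul_def] using this
  have hd₁ := key a₁ b₁ c₁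
  have hd₂ := key a₂ b₂ c₂
  have hd₃ := key a₃ b₃ c₃
  have hd₄ := key a₄ b₄ c₄
  have hdC₁ := key aC₁ bC₁ cC₁
  have hdC₂ := key aC₂ bC₂ cC₂
  have hdI := ((((hd₁.mul hd₂).mul (sq aC₂ bC₂ cC₂ _ (key aC₂ bC₂ cC₂))).const_mul w₁).add
      (((hd₃.mul hd₄).mul (sq aC₁ bC₁ cC₁ _ (key aC₁ bC₁ cC₁))).const_mul w₂)).add
      (((sq aC₁ bC₁ cC₁ _ (key aC₁ bC₁ cC₁)).mul (sq aC₂ bC₂ cC₂ _ (key aC₂ bC₂ cC₂))).const_mul w₀)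
  have hIp : (fun q : ℝ × ℝ =>
      w₁ * ((a₁ * q.1 + b₁ * q.2 + c₁) * (a₂ * q.1 + b₂ * q.2 + c₂) * (aC₂ * q.1 + bC₂ * q.2 + cC₂) ^ 2)
      + w₂ * ((a₃ * q.1 + b₃ * q.2 + c₃) * (a₄ * q.1 + b₄ * q.2 + c₄) * (aC₁ * q.1 + bC₁ * q.2 + cC₁) ^ 2)
      + w₀ * ((aC₁ * q.1 + bC₁ * q.2 + cC₁) ^ 2 * (aC₂ * q.1 + bC₂ * q.2 + cC₂) ^ 2)) p = 0 := by
    simp only [hp₁, hpC]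
    ring
  have hfd := hdI.fderiv
  simp only [Pi.mul_def, Pi.add_def] at hfd
  have hfd₁ := hd₁.fderiv
  refine ⟨hIp, ?_, ?_⟩
  · rw [hfd, hfd₁]
    simp only [hp₁, hpC, zero_mul, mul_zero, zero_smul, smul_zero, add_zero, zero_add,
      zero_pow, smul_smul, OfNat.ofNat_ne_zero, ne_eq, not_false_iff]
    module
  · intro hw hL2 hC2 hD
    refine ⟨w₁ * (a₂ * p.1 + b₂ * p.2 + c₂) * (aC₂ * p.1 + bC₂ * p.2 + cC₂) ^ 2, ?_, ?_⟩
    · exact mul_ne_zero (mul_ne_zero hw hL2) (pow_ne_zero 2 hC2)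
    · rw [hfd, hfd₁]
      simp only [hp₁, hpC, zero_mul, mul_zero, zero_smul, smul_zero, add_zero, zero_add,
        zero_pow, smul_smul, OfNat.ofNat_ne_zero, ne_eq, not_false_iff]
      module
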